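/- Let ℰ_n be the 2×2 complex matrix with first row (P_n′(i), P_{n−2}′(i)) and second row (∫ P_n(x)(1+x²)^{−2} dμ(x), ∫ P_{n−2}(x)(1+x²)^{−2} dμ(x)), and let 𝒪_n be the 2×2 complex matrix with first row (P_n′(i), P_{n−2}′(i)) and second row (∫ (x³+3x)P_n(x)(1+x²)^{−2} dμ(x), ∫ (x³+3x)P_{n−2}(x)(1+x²)^{−2} dμ(x)). Then there exist real numbers (A_n)_{n≥1}, (B_n)_{n≥2} such that the family R_0 = 1, R_1 = P_3 + A_1 P_1, R_n = P_{n+2} + A_n P_n + B_n P_{n−2} (n ≥ 2) satisfies (i) R_n′(i) = 0 for all n ≥ 1, (ii) ∫ R_n(x)(1+x²)^{−2} dμ(x) = 0 for all n ≥ 1, and (iii) ∫ R_1(x)R_n(x)(1+x²)^{−2} dμ(x) = 0 for all n ≥ 2, if and only if det ℰ_n ≠ 0 for every even n ≥ 2 and det 𝒪_n ≠ 0 for every odd n ≥ 3. -/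

import Mathlib

open MeasureTheory Polynomial

/-- Evaluation of a real polynomial at a complex point. -/
noncomputable def evC (p : Polynomial ℝ) (z : ℂ) : ℂ :=
  (p.map (algebraMap ℝ ℂ)).eval z

/-- Evaluation of the derivative of a real polynomial at a complex point. -/
noncomputable def devC (p : Polynomial ℝ) (z : ℂ) : ℂ :=
  (Polynomial.derivative (p.map (algebraMap ℝ ℂ))).eval z

/-- The (topological) support of a measure on ℝ: points all of whose
neighborhoods have nonzero measure. -/
def measSupport (μ : Measure ℝ) : Set ℝ := {x | ∀ U ∈ nhds x, μ U ≠ 0}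



lemma evC_add (p q : Polynomial ℝ) (z : ℂ) : evC (p + q) z = evC p z + evC q z := by
  simp [evC]

lemma evC_mul (p q : Polynomial ℝ) (z : ℂ) : evC (p * q) z = evC p z * evC q z := by
  simp [evC]

lemma evC_C (a : ℝ) (z : ℂ) : evC (C a) z = (a : ℂ) := by
  simp [evC]

lemma devC_eq (p : Polynomial ℝ) (z : ℂ) : devC p z = evC (derivative p) z := by
  simp [devC, evC, Polynomial.derivative_map]

lemma devC_add (p q : Polynomial ℝ) (z : ℂ) : devC (p + q) z = devC p z + devC q z := by
  simp [devC]

lemma devC_C_mul (a : ℝ) (p : Polynomial ℝ) (z : ℂ) :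
    devC (C a * p) z = (a : ℂ) * devC p z := by
  simp [devC]

lemma devC_mul_van (h : Polynomial ℝ) :
    devC (((1 : Polynomial ℝ) + X^2)^2 * h) Complex.I = 0 := by
  simp [devC, Polynomial.derivative_pow, Complex.I_sq]

lemma evC_conj (p : Polynomial ℝ) (z : ℂ) :
    evC p ((starRingEnd ℂ) z) = (starRingEnd ℂ) (evC p z) := by
  unfold evC
  rw [Polynomial.eval_map, Polynomial.eval_map, Polynomial.hom_eval₂]
  congr 1
  ext r
  simp

lemma comp_neg_of_parity (p : Polynomial ℝ) (ε : ℝ) (h : ∀ x, p.eval (-x) = ε * p.eval x) :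
    p.comp (-X) = C ε * p :=
  Polynomial.funext (by intro r; simp [Polynomial.eval_comp, h])

lemma devC_conj_eq (p : Polynomial ℝ) (ε : ℝ) (h : ∀ x, p.eval (-x) = ε * p.eval x) :
    (starRingEnd ℂ) (devC p Complex.I) = -(ε : ℂ) * devC p Complex.I := by
  have hc := comp_neg_of_parity p ε h
  set q : Polynomial ℂ := p.map (algebraMap ℝ ℂ) with hq
  have h1 : q.comp (-X) = C (ε : ℂ) * q := by
    have := congrArg (fun r => r.map (algebraMap ℝ ℂ)) hc
    simpa [Polynomial.map_comp, hq] using this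
  have h2 := congrArg Polynomial.derivative h1
  rw [Polynomial.derivative_comp] at h2
  simp only [Polynomial.derivative_neg, Polynomial.derivative_X, Polynomial.derivative_mul,
    Polynomial.derivative_C, zero_mul, zero_add] at h2
  -- h2 : (derivative q).comp (-X) * (-1) = C ε * derivative q
  have h3 := congrArg (Polynomial.eval Complex.I) h2
  simp only [Polynomial.eval_mul, Polynomial.eval_comp, Polynomial.eval_neg, Polynomial.eval_X,
    Polynomial.eval_C, Polynomial.eval_one] at h3
  -- h3 : (derivative q).eval (-I) * (-1) = ε * (derivative q).eval I
  have h4 : (Polynomial.derivative q).eval (-Complex.I)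
      = (starRingEnd ℂ) ((Polynomial.derivative q).eval Complex.I) := by
    have := evC_conj (Polynomial.derivative p) Complex.I
    simp only [Complex.conj_I] at this
    simpa [evC, hq, Polynomial.derivative_map] using this
  rw [h4] at h3
  have : devC p Complex.I = (Polynomial.derivative q).eval Complex.I := by
    simp [devC, hq]
  rw [this]
  linear_combination (-1 : ℂ) * h3

lemma devC_re_zero (p : Polynomial ℝ) (h : ∀ x, p.eval (-x) = p.eval x) :
    (devC p Complex.I).re = 0 := by
  have := devC_conj_eq p 1 (by simpa using h)
  have hre := congrArg Complex.re this
  simp at hre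
  linarith

lemma devC_im_zero (p : Polynomial ℝ) (h : ∀ x, p.eval (-x) = -p.eval x) :
    (devC p Complex.I).im = 0 := by
  have := devC_conj_eq p (-1) (by intro x; simpa using h x)
  have him := congrArg Complex.im this
  simp at him
  linarith



lemma intg (μ : Measure ℝ) (hint : ∀ p : Polynomial ℝ, Integrable (fun x => p.eval x) μ)
    (p : Polynomial ℝ) : Integrable (fun x => p.eval x / (1+x^2)^2) μ := by
  apply (hint p).mono
  · exact ((p.continuous_aeval).div (by continuity) (fun x => by positivity)).aestronglyMeasurable
  · filter_upwards with x
    rw [Real.norm_eq_abs, Real.norm_eq_abs, abs_div]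
    have h1 : (1:ℝ) ≤ |(1+x^2)^2| := by
      rw [abs_of_pos (by positivity)]; nlinarith [sq_nonneg x]
    exact div_le_self (abs_nonneg _) h1

lemma int_odd (μ : Measure ℝ) (hsymm : μ.map (fun x => -x) = μ) (f : ℝ → ℝ)
    (hf : Integrable f μ) (hodd : ∀ x, f (-x) = - f x) : ∫ x, f x ∂μ = 0 := by
  have hm : AEStronglyMeasurable f (Measure.map (fun x : ℝ => -x) μ) := by
    rw [hsymm]; exact hf.1
  have h1 : ∫ y, f y ∂(Measure.map (fun x : ℝ => -x) μ) = ∫ x, f (-x) ∂μ :=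
    integral_map (measurable_neg.aemeasurable) hm
  rw [hsymm] at h1
  have h2 : ∫ x, f (-x) ∂μ = ∫ x, -f x ∂μ := by
    congr 1; ext x; rw [hodd]
  rw [integral_neg] at h2
  rw [h2] at h1
  linarith

lemma sq_int_zero (μ : Measure ℝ) (hsupp : (measSupport μ).Infinite)
    (hint : ∀ p : Polynomial ℝ, Integrable (fun x => p.eval x) μ)
    (t : Polynomial ℝ) (h : ∫ x, t.eval x * t.eval x ∂μ = 0) : t = 0 := by
  by_contra ht
  obtain ⟨x, hxs, hxr⟩ : ∃ x, x ∈ measSupport μ ∧ ¬ t.IsRoot x := by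
    have hfin := Polynomial.finite_setOf_isRoot ht
    obtain ⟨x, hx⟩ := (hsupp.diff hfin).nonempty
    exact ⟨x, hx.1, hx.2⟩
  have hInt : Integrable (fun x => t.eval x * t.eval x) μ := by
    have := hint (t*t); simpa [Polynomial.eval_mul] using this
  have h0 := (integral_eq_zero_iff_of_nonneg (fun x => mul_self_nonneg _) hInt).mp h
  have hμ : μ {y | t.eval y * t.eval y ≠ 0} = 0 := by
    simpa [Filter.EventuallyEq, ae_iff] using h0
  have hset : {y : ℝ | t.eval y * t.eval y ≠ 0} = {y : ℝ | t.eval y ≠ 0} := by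
    ext y; simp [mul_self_eq_zero]
  rw [hset] at hμ
  have hU : {y : ℝ | t.eval y ≠ 0} ∈ nhds x := by
    have : IsOpen {y : ℝ | t.eval y ≠ 0} :=
      isOpen_compl_iff.mpr ((isClosed_singleton).preimage t.continuous_aeval)
    exact this.mem_nhds hxr
  exact hxs _ hU hμ

lemma span_P (P : ℕ → Polynomial ℝ) (hm : ∀ n, (P n).Monic) (hd : ∀ n, (P n).natDegree = n) :
    ∀ (N : ℕ) (p : Polynomial ℝ), p.natDegree ≤ N → p ∈ Submodule.span ℝ (Set.range P) := by
  intro N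
  induction N with
  | zero =>
    intro p hp
    have h0 : P 0 = 1 := ((hm 0).natDegree_eq_zero).mp (hd 0)
    have : p = p.coeff 0 • P 0 := by
      rw [h0, smul_eq_C_mul, mul_one]
      exact Polynomial.eq_C_of_natDegree_le_zero hp
    rw [this]
    exact Submodule.smul_mem _ _ (Submodule.subset_span ⟨0, rfl⟩)
  | succ N ih =>
    intro p hp
    by_cases h : p.natDegree ≤ N
    · exact ih p h
    have hdeg : p.natDegree = N+1 := by omega
    have hp0 : p ≠ 0 := by
      intro h0; rw [h0] at hdeg; simp at hdeg
    have hlc : p.leadingCoeff ≠ 0 := Polynomial.leadingCoeff_ne_zero.mpr hp0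
    set q := C p.leadingCoeff * P (N+1) with hqdef
    have hq0 : q ≠ 0 := mul_ne_zero (by simpa using hlc) (hm (N+1)).ne_zero
    have hqd : q.natDegree = N+1 := by
      rw [hqdef, Polynomial.natDegree_C_mul hlc, hd]
    have hqdeg : q.degree = p.degree := by
      rw [Polynomial.degree_eq_natDegree hq0, Polynomial.degree_eq_natDegree hp0, hqd, hdeg]
    have hqlc : q.leadingCoeff = p.leadingCoeff := by
      rw [hqdef, Polynomial.leadingCoeff_mul, Polynomial.leadingCoeff_C, (hm (N+1)).leadingCoeff, mul_one]
    have hqmem : q ∈ Submodule.span ℝ (Set.range P) := by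
      rw [hqdef, ← smul_eq_C_mul]
      exact Submodule.smul_mem _ _ (Submodule.subset_span ⟨N+1, rfl⟩)
    by_cases hpq : p - q = 0
    · have : p = q := by linear_combination (norm := ring_nf) hpq
      rw [this]; exact hqmem
    · have hlt : (p - q).degree < p.degree := Polynomial.degree_sub_lt hqdeg.symm hp0 hqlc.symm
      have hnd : (p - q).natDegree < p.natDegree := Polynomial.natDegree_lt_natDegree hpq hlt
      have := ih (p - q) (by omega)
      have : p = (p - q) + q := by ring
      rw [this]
      exact Submodule.add_mem _ (ih (p-q) (by omega)) hqmem

lemma null2 (a b c d : ℝ) (h : a*d - b*c = 0) :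
    ∃ α β : ℝ, ¬(α = 0 ∧ β = 0) ∧ α*a + β*c = 0 ∧ α*b + β*d = 0 := by
  by_cases ha : a = 0
  · by_cases hc : c = 0
    · by_cases hbd : b = 0 ∧ d = 0
      · exact ⟨1, 0, by simp, by simp [ha, hc], by simp [hbd.1, hbd.2]⟩
      · refine ⟨d, -b, ?_, by simp [ha, hc], by ring⟩
        intro ⟨h1, h2⟩
        exact hbd ⟨by linarith [neg_eq_zero.mp h2], h1⟩
    · have hb : b = 0 := by
        have : -(b*c) = 0 := by rw [ha] at h; linarith
        rcases mul_eq_zero.mp (by linarith : b * c = 0) with h' | h'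
        · exact h'
        · exact absurd h' hc
      exact ⟨1, 0, by simp, by simp [ha], by simp [hb]⟩
  · refine ⟨c, -a, ?_, by ring, by linarith [h]⟩
    intro ⟨_, h2⟩
    exact ha (by linarith [neg_eq_zero.mp h2])

lemma solve2 (a b c d e f : ℝ) (h : a*d - b*c ≠ 0) :
    ∃ A B : ℝ, e + a*A + b*B = 0 ∧ f + c*A + d*B = 0 := by
  refine ⟨(-e*d + b*f)/(a*d - b*c), (-a*f + e*c)/(a*d - b*c), ?_, ?_⟩
  · linear_combination (-e) * (mul_inv_cancel₀ h)
  · linear_combination (-f) * (mul_inv_cancel₀ h)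

lemma int_comb (μ : Measure ℝ) (hint : ∀ p : Polynomial ℝ, Integrable (fun x => p.eval x) μ)
    (w p q r : Polynomial ℝ) (a b : ℝ) :
    ∫ x, (w*(p + C a * q + C b * r)).eval x / (1+x^2)^2 ∂μ
    = ((∫ x, (w*p).eval x / (1+x^2)^2 ∂μ) + a * (∫ x, (w*q).eval x / (1+x^2)^2 ∂μ))
      + b * ∫ x, (w*r).eval x / (1+x^2)^2 ∂μ := by
  have i1 := intg μ hint (w*p)
  have i2 := (intg μ hint (w*q)).const_mul a
  have i3 := (intg μ hint (w*r)).const_mul b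
  calc ∫ x, (w*(p + C a * q + C b * r)).eval x / (1+x^2)^2 ∂μ
      = ∫ x, ((w*p).eval x / (1+x^2)^2
          + (a * ((w*q).eval x / (1+x^2)^2) + b * ((w*r).eval x / (1+x^2)^2))) ∂μ := by
        congr 1; funext x
        simp only [Polynomial.eval_add, Polynomial.eval_mul, Polynomial.eval_C]
        ring
    _ = (∫ x, (w*p).eval x / (1+x^2)^2 ∂μ)
          + ∫ x, (a * ((w*q).eval x / (1+x^2)^2) + b * ((w*r).eval x / (1+x^2)^2)) ∂μ :=
        integral_add i1 (i2.add i3)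
    _ = (∫ x, (w*p).eval x / (1+x^2)^2 ∂μ)
          + ((∫ x, a * ((w*q).eval x / (1+x^2)^2) ∂μ) + ∫ x, b * ((w*r).eval x / (1+x^2)^2) ∂μ) := by
        rw [integral_add i2 i3]
    _ = ((∫ x, (w*p).eval x / (1+x^2)^2 ∂μ) + a * (∫ x, (w*q).eval x / (1+x^2)^2 ∂μ))
          + b * ∫ x, (w*r).eval x / (1+x^2)^2 ∂μ := by
        rw [integral_const_mul, integral_const_mul]; ring

lemma devC_comb (u : ℂ) (a b : ℝ) (p q r : Polynomial ℝ) :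
    (u * devC (p + C a * q + C b * r) Complex.I).re
    = ((u * devC p Complex.I).re + a * (u * devC q Complex.I).re)
      + b * (u * devC r Complex.I).re := by
  rw [devC_add, devC_add, devC_C_mul, devC_C_mul]
  rw [mul_add, mul_add, Complex.add_re, Complex.add_re]
  rw [show u * ((a:ℂ) * devC q Complex.I) = (a:ℂ) * (u * devC q Complex.I) by ring,
      show u * ((b:ℂ) * devC r Complex.I) = (b:ℂ) * (u * devC r Complex.I) by ring,
      Complex.re_ofReal_mul, Complex.re_ofReal_mul]

lemma devC_cubic (e : ℝ) :
    devC (X^3 + C e * X : Polynomial ℝ) Complex.I = (e : ℂ) - 3 := by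
  simp [devC, Complex.I_sq]
  ring

lemma devC_X_sq : devC (X^2 : Polynomial ℝ) Complex.I = 2 * Complex.I := by
  simp [devC]
  norm_num

lemma devC_X : devC (X : Polynomial ℝ) Complex.I = 1 := by
  simp [devC]

lemma evC_cubic : evC (X^3 + C 3 * X : Polynomial ℝ) Complex.I = 2 * Complex.I := by
  have h3 : Complex.I^3 = -Complex.I := by
    rw [pow_succ, Complex.I_sq]; ring
  simp [evC, h3]
  ring

lemma evC_cubic_ne : evC (X^3 + C 3 * X : Polynomial ℝ) Complex.I ≠ 0 := by
  rw [evC_cubic]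
  simp [Complex.I_ne_zero]

lemma evC_one_ne : evC (1 : Polynomial ℝ) Complex.I ≠ 0 := by
  simp [evC]


lemma P1_eq (p : Polynomial ℝ) (hm : p.Monic) (hd : p.natDegree = 1)
    (hpar : ∀ x : ℝ, p.eval (-x) = (-1:ℝ)^1 * p.eval x) : p = X := by
  have h0 : p.coeff 0 = 0 := by
    have := hpar 0
    rw [neg_zero] at this
    rw [Polynomial.coeff_zero_eq_eval_zero]
    linarith
  have h1 : p.coeff 1 = 1 := by
    have := hm.coeff_natDegree
    rwa [hd] at this
  have := Polynomial.eq_X_add_C_of_natDegree_le_one (le_of_eq hd)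
  rw [h0, h1] at this
  simpa using this

lemma P3_eq (p : Polynomial ℝ) (hm : p.Monic) (hd : p.natDegree = 3)
    (hpar : ∀ x : ℝ, p.eval (-x) = (-1:ℝ)^3 * p.eval x) :
    ∃ c : ℝ, p = X^3 + C c * X := by
  have heval : ∀ x : ℝ, p.eval x
      = p.coeff 0 + p.coeff 1 * x + p.coeff 2 * x^2 + p.coeff 3 * x^3 := by
    intro x
    conv_lhs => rw [Polynomial.as_sum_range' p 4 (by omega)]
    simp [Polynomial.eval_finset_sum, Finset.sum_range_succ, Polynomial.eval_monomial]
  have h0 : p.coeff 0 = 0 := by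
    have := hpar 0
    rw [neg_zero] at this
    rw [Polynomial.coeff_zero_eq_eval_zero]
    norm_num at this
    linarith
  have h2 : p.coeff 2 = 0 := by
    have := hpar 1
    rw [heval 1, heval (-1)] at this
    simp at this
    linarith
  have h3 : p.coeff 3 = 1 := by
    have := hm.coeff_natDegree
    rwa [hd] at this
  refine ⟨p.coeff 1, ?_⟩
  conv_lhs => rw [Polynomial.as_sum_range' p 4 (by omega)]
  rw [Finset.sum_range_succ, Finset.sum_range_succ, Finset.sum_range_succ, Finset.sum_range_one,
    h0, h2, h3]
  simp [← Polynomial.X_pow_eq_monomial, ← Polynomial.C_mul_X_eq_monomial]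
  ring

lemma evC_eq_aeval (p : Polynomial ℝ) (z : ℂ) : evC p z = Polynomial.aeval z p := by
  simp [evC, Polynomial.eval_map, Polynomial.aeval_def]

lemma core (μ : Measure ℝ)
    (hsupp : (measSupport μ).Infinite)
    (hint : ∀ p : Polynomial ℝ, Integrable (fun x => p.eval x) μ)
    (P : ℕ → Polynomial ℝ)
    (hPmonic : ∀ n, (P n).Monic)
    (hPdeg : ∀ n, (P n).natDegree = n)
    (hPorth : ∀ m n, m ≠ n → ∫ x, (P m).eval x * (P n).eval x ∂μ = 0)
    (N : ℕ) (w : Polynomial ℝ) (hwI : evC w Complex.I ≠ 0)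
    (u : ℂ) (α β : ℝ) (hαβ : ¬(α = 0 ∧ β = 0))
    (pwit : Polynomial ℝ) (hwit : (u * devC pwit Complex.I).re ≠ 0)
    (hvan : ∀ j, N ≤ j → α * (u * devC (P j) Complex.I).re
        + β * ∫ x, (w * P j).eval x / (1+x^2)^2 ∂μ = 0) : False := by
  classical
  set Λ : Polynomial ℝ → ℝ :=
    fun p => α * (u * devC p Complex.I).re + β * ∫ x, (w * p).eval x / (1+x^2)^2 ∂μ with hΛ
  have nz : ∀ j, (∫ x, (P j).eval x * (P j).eval x ∂μ) ≠ 0 := by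
    intro j h
    exact (hPmonic j).ne_zero (sq_int_zero μ hsupp hint (P j) h)
  set g : Polynomial ℝ :=
    ∑ j ∈ Finset.range N, C (Λ (P j) / ∫ x, (P j).eval x * (P j).eval x ∂μ) * P j with hg
  -- key1 : Λ agrees with ∫ · g on each P j
  have key1 : ∀ j, Λ (P j) = ∫ x, (P j).eval x * g.eval x ∂μ := by
    intro j
    have hev : (fun x : ℝ => (P j).eval x * g.eval x)
        = fun x : ℝ => ∑ k ∈ Finset.range N,
            ((Λ (P k) / ∫ y, (P k).eval y * (P k).eval y ∂μ) * ((P j).eval x * (P k).eval x)) := by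
      funext x
      rw [hg]
      rw [Polynomial.eval_finset_sum]
      rw [Finset.mul_sum]
      congr 1; funext k
      rw [Polynomial.eval_mul, Polynomial.eval_C]
      ring
    have hIk : ∀ k ∈ Finset.range N, Integrable (fun x =>
        (Λ (P k) / ∫ y, (P k).eval y * (P k).eval y ∂μ) * ((P j).eval x * (P k).eval x)) μ := by
      intro k _
      refine Integrable.const_mul ?_ _
      have := hint (P j * P k)
      simpa [Polynomial.eval_mul] using this
    have hInt : ∫ x, (P j).eval x * g.eval x ∂μ
        = ∑ k ∈ Finset.range N, ((Λ (P k) / ∫ y, (P k).eval y * (P k).eval y ∂μ)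
            * ∫ x, (P j).eval x * (P k).eval x ∂μ) := by
      rw [hev, integral_finset_sum _ hIk]
      congr 1; funext k
      rw [integral_const_mul]
    rw [hInt]
    rcases lt_or_ge j N with hj | hj
    · rw [Finset.sum_eq_single_of_mem j (Finset.mem_range.mpr hj)]
      · rw [div_mul_cancel₀ _ (nz j)]
      · intro k _ hk
        rw [hPorth j k (Ne.symm hk), mul_zero]
    · have hzero : ∀ k ∈ Finset.range N, ((Λ (P k) / ∫ y, (P k).eval y * (P k).eval y ∂μ)
          * ∫ x, (P j).eval x * (P k).eval x ∂μ) = 0 := by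
        intro k hk
        have : k ≠ j := by
          have := Finset.mem_range.mp hk; omega
        rw [hPorth j k (Ne.symm this), mul_zero]
      rw [Finset.sum_eq_zero hzero]
      exact hvan j hj
  -- linearity of Λ
  have Λadd : ∀ p q : Polynomial ℝ, Λ (p + q) = Λ p + Λ q := by
    intro p q
    have h1 : (u * devC (p+q) Complex.I).re
        = (u * devC p Complex.I).re + (u * devC q Complex.I).re := by
      rw [devC_add, mul_add, Complex.add_re]
    have h2 : ∫ x, (w*(p+q)).eval x / (1+x^2)^2 ∂μ
        = (∫ x, (w*p).eval x / (1+x^2)^2 ∂μ) + ∫ x, (w*q).eval x / (1+x^2)^2 ∂μ := by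
      rw [← integral_add (intg μ hint (w*p)) (intg μ hint (w*q))]
      congr 1; funext x
      rw [mul_add, Polynomial.eval_add]
      ring
    simp only [hΛ, h1, h2]; ring
  have Λsmul : ∀ (a : ℝ) (p : Polynomial ℝ), Λ (C a * p) = a * Λ p := by
    intro a p
    have h1 : (u * devC (C a * p) Complex.I).re = a * (u * devC p Complex.I).re := by
      rw [devC_C_mul, show u * ((a:ℂ) * devC p Complex.I) = (a:ℂ) * (u * devC p Complex.I) by ring,
        Complex.re_ofReal_mul]
    have h2 : ∫ x, (w*(C a * p)).eval x / (1+x^2)^2 ∂μ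
        = a * ∫ x, (w*p).eval x / (1+x^2)^2 ∂μ := by
      rw [← integral_const_mul]
      congr 1; funext x
      rw [show w * (C a * p) = C a * (w * p) by ring, Polynomial.eval_mul, Polynomial.eval_C]
      ring
    simp only [hΛ, h1, h2]; ring
  have keyAll : ∀ p : Polynomial ℝ, Λ p = ∫ x, p.eval x * g.eval x ∂μ := by
    intro p
    have hmem := span_P P hPmonic hPdeg p.natDegree p le_rfl
    induction hmem using Submodule.span_induction with
    | mem x hx =>
      obtain ⟨j, rfl⟩ := hx
      exact key1 j
    | zero =>
      have h1 : Λ 0 = 0 := by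
        simp [hΛ, devC]
      rw [h1]; simp
    | add x y hx hy ihx ihy =>
      rw [Λadd x y, ihx, ihy, ← integral_add]
      · congr 1; funext z
        rw [Polynomial.eval_add]; ring
      · have := hint (x*g); simpa [Polynomial.eval_mul] using this
      · have := hint (y*g); simpa [Polynomial.eval_mul] using this
    | smul a x hx ih =>
      rw [smul_eq_C_mul, Λsmul a x, ih, ← integral_const_mul]
      congr 1; funext z
      rw [Polynomial.eval_mul, Polynomial.eval_C]
      ring
  set t : Polynomial ℝ := C β * w - ((1:Polynomial ℝ)+X^2)^2 * g with ht
  have step4 : ∀ h : Polynomial ℝ, ∫ x, (h * t).eval x ∂μ = 0 := by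
    intro h
    have hdir : Λ (((1:Polynomial ℝ)+X^2)^2 * h) = β * ∫ x, (w*h).eval x ∂μ := by
      have h2 : (fun x : ℝ => (w * (((1:Polynomial ℝ)+X^2)^2 * h)).eval x / (1+x^2)^2)
          = fun x : ℝ => (w*h).eval x := by
        funext x
        have hx : ((1:ℝ)+x^2)^2 ≠ 0 := by positivity
        simp only [Polynomial.eval_mul, Polynomial.eval_pow, Polynomial.eval_add,
          Polynomial.eval_one, Polynomial.eval_X]
        field_simp
      simp only [hΛ]
      rw [devC_mul_van h]
      rw [h2]
      simp
    have hkey := keyAll (((1:Polynomial ℝ)+X^2)^2 * h)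
    have hInt1 : Integrable (fun x => β * (w*h).eval x) μ := (hint (w*h)).const_mul β
    have hInt2 : Integrable (fun x => ((((1:Polynomial ℝ)+X^2)^2 * h) * g).eval x) μ := hint _
    have hsplit : ∫ x, (h*t).eval x ∂μ
        = ∫ x, (β * (w*h).eval x - ((((1:Polynomial ℝ)+X^2)^2 * h) * g).eval x) ∂μ := by
      congr 1; funext x
      simp only [ht, Polynomial.eval_mul, Polynomial.eval_sub, Polynomial.eval_add,
        Polynomial.eval_pow, Polynomial.eval_one, Polynomial.eval_X, Polynomial.eval_C]
      ring
    rw [hsplit, integral_sub hInt1 hInt2, integral_const_mul]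
    have hc : ∫ x, ((((1:Polynomial ℝ)+X^2)^2 * h) * g).eval x ∂μ
        = ∫ x, (((1:Polynomial ℝ)+X^2)^2 * h).eval x * g.eval x ∂μ := by
      congr 1; funext x; rw [Polynomial.eval_mul]
    rw [hc, ← hkey, hdir]
    ring
  have ht0 : t = 0 := by
    apply sq_int_zero μ hsupp hint t
    have := step4 t
    simpa [Polynomial.eval_mul] using this
  have hβ : β = 0 := by
    have h0 : evC t Complex.I = 0 := by
      rw [ht0]; simp [evC]
    rw [evC_eq_aeval, ht] at h0
    simp only [map_sub, map_mul, map_pow, map_add, map_one, Polynomial.aeval_X,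
      Polynomial.aeval_C, Complex.I_sq] at h0
    norm_num at h0
    rcases h0 with h0 | h0
    · exact_mod_cast h0
    · exact absurd (by rw [evC_eq_aeval]; exact h0) hwI
  have hg0 : g = 0 := by
    have h1 : ((1:Polynomial ℝ)+X^2)^2 * g = 0 := by
      have := ht0
      rw [ht, hβ] at this
      simpa using this
    rcases mul_eq_zero.mp h1 with h2 | h2
    · exfalso
      have := congrArg (Polynomial.eval (0:ℝ)) h2
      simp at this
    · exact h2
  have hα : α ≠ 0 := fun h => hαβ ⟨h, hβ⟩
  have hfin : Λ pwit = 0 := by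
    rw [keyAll pwit, hg0]
    simp
  rw [hΛ] at hfin
  simp only [hβ, zero_mul, add_zero] at hfin
  exact hwit (by
    rcases mul_eq_zero.mp hfin with h | h
    · exact absurd h hα
    · exact h)


lemma det_iff (d2 d0 : ℂ) (l2 l0 : ℝ) :
    Matrix.det !![d2, d0; (l2:ℂ), (l0:ℂ)] = 0 ↔
      (d2.re * l0 - d0.re * l2 = 0 ∧ d2.im * l0 - d0.im * l2 = 0) := by
  rw [Matrix.det_fin_two_of, Complex.ext_iff]
  constructor
  · rintro ⟨h1, h2⟩
    constructor
    · simpa [Complex.mul_re] using h1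
    · simpa [Complex.mul_im] using h2
  · rintro ⟨h1, h2⟩
    constructor
    · simpa [Complex.mul_re] using h1
    · simpa [Complex.mul_im] using h2

/-- Proposition 2.2 of the paper: existence of the DEK-type family
`R_n` is equivalent to the nonvanishing of the determinants det ℰ_n (n even ≥ 2)
and det 𝒪_n (n odd ≥ 3). -/
theorem stmt_0
    (μ : Measure ℝ)
    (hsymm : μ.map (fun x => -x) = μ)
    (hsupp : (measSupport μ).Infinite)
    (hint : ∀ p : Polynomial ℝ, Integrable (fun x => p.eval x) μ)
    (P : ℕ → Polynomial ℝ)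
    (hPmonic : ∀ n, (P n).Monic)
    (hPdeg : ∀ n, (P n).natDegree = n)
    (hPorth : ∀ m n, m ≠ n → ∫ x, (P m).eval x * (P n).eval x ∂μ = 0)
    (hPparity : ∀ n x, (P n).eval (-x) = (-1 : ℝ)^n * (P n).eval x)
    :
    (∃ A B : ℕ → ℝ, ∃ R : ℕ → Polynomial ℝ,
      R 0 = 1 ∧
      R 1 = P 3 + Polynomial.C (A 1) * P 1 ∧
      (∀ n, 2 ≤ n →
        R n = P (n+2) + Polynomial.C (A n) * P n + Polynomial.C (B n) * P (n-2)) ∧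
      (∀ n, 1 ≤ n → devC (R n) Complex.I = 0) ∧
      (∀ n, 1 ≤ n → ∫ x, (R n).eval x / (1+x^2)^2 ∂μ = 0) ∧
      (∀ n, 2 ≤ n → ∫ x, (R 1).eval x * (R n).eval x / (1+x^2)^2 ∂μ = 0))
    ↔
    ((∀ n, 2 ≤ n → Even n →
        Matrix.det
          !![devC (P n) Complex.I, devC (P (n-2)) Complex.I;
             ((∫ x, (P n).eval x / (1+x^2)^2 ∂μ : ℝ) : ℂ),
             ((∫ x, (P (n-2)).eval x / (1+x^2)^2 ∂μ : ℝ) : ℂ)] ≠ 0) ∧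
     (∀ n, 3 ≤ n → Odd n →
        Matrix.det
          !![devC (P n) Complex.I, devC (P (n-2)) Complex.I;
             ((∫ x, (x^3 + 3*x) * (P n).eval x / (1+x^2)^2 ∂μ : ℝ) : ℂ),
             ((∫ x, (x^3 + 3*x) * (P (n-2)).eval x / (1+x^2)^2 ∂μ : ℝ) : ℂ)] ≠ 0)) := by

  classical
  have evenPt : ∀ j : ℕ, Even j → ∀ x : ℝ, (P j).eval (-x) = (P j).eval x := by
    intro j hj x
    rw [hPparity j x, hj.neg_one_pow, one_mul]
  have oddPt : ∀ j : ℕ, Odd j → ∀ x : ℝ, (P j).eval (-x) = -(P j).eval x := by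
    intro j hj x
    rw [hPparity j x, hj.neg_one_pow, neg_one_mul]
  have one_mul_int : ∀ p : Polynomial ℝ,
      (∫ x, ((1:Polynomial ℝ) * p).eval x / (1+x^2)^2 ∂μ) = ∫ x, p.eval x / (1+x^2)^2 ∂μ := by
    intro p; congr 1; funext x; rw [one_mul]
  have w1_int : ∀ p : Polynomial ℝ,
      (∫ x, ((X^3 + C (3:ℝ) * X) * p).eval x / (1+x^2)^2 ∂μ)
        = ∫ x, (x^3 + 3*x) * p.eval x / (1+x^2)^2 ∂μ := by
    intro p; congr 1; funext x
    simp [Polynomial.eval_mul]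
  have vanOdd : ∀ j : ℕ, Odd j → ∫ x, ((1:Polynomial ℝ) * P j).eval x / (1+x^2)^2 ∂μ = 0 := by
    intro j hj
    apply int_odd μ hsymm _ (intg μ hint _)
    intro x
    simp only [Polynomial.eval_mul, Polynomial.eval_one, one_mul, neg_sq]
    rw [oddPt j hj x]
    ring
  have vanEven : ∀ j : ℕ, Even j →
      ∫ x, ((X^3 + C (3:ℝ) * X) * P j).eval x / (1+x^2)^2 ∂μ = 0 := by
    intro j hj
    apply int_odd μ hsymm _ (intg μ hint _)
    intro x
    simp only [Polynomial.eval_mul, Polynomial.eval_add, Polynomial.eval_pow,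
      Polynomial.eval_X, Polynomial.eval_C, neg_sq]
    rw [evenPt j hj x]
    ring
  have hP1 : P 1 = X := P1_eq (P 1) (hPmonic 1) (hPdeg 1) (hPparity 1)
  obtain ⟨c3, hP3⟩ := P3_eq (P 3) (hPmonic 3) (hPdeg 3) (hPparity 3)
  have huz : ∀ z : ℂ, (-Complex.I * z).re = z.im := by
    intro z; simp [Complex.mul_re]
  have hone : ∀ z : ℂ, ((1:ℂ) * z).re = z.re := fun z => by rw [one_mul]
  constructor
  · rintro ⟨A, B, R, hR0, hR1e, hRn, hi, hii, hiii⟩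
    have hR1 : R 1 = X^3 + C (3:ℝ) * X := by
      have hcomb : P 3 + C (A 1) * P 1 = X^3 + C (c3 + A 1) * X := by
        rw [hP3, hP1, map_add]; ring
      have hdev := hi 1 le_rfl
      rw [hR1e, hcomb] at hdev ⊢
      rw [devC_cubic] at hdev
      have hc : ((c3 + A 1 : ℝ) : ℂ) = ((3:ℝ) : ℂ) := by
        push_cast at hdev ⊢
        linear_combination hdev
      have : c3 + A 1 = 3 := by exact_mod_cast hc
      rw [this]
    constructor
    · -- even determinants
      intro n hn2 hneven
      by_contra hdet0
      obtain ⟨n', rfl⟩ : ∃ m, n = m + 2 := ⟨n-2, by omega⟩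
      rw [Nat.add_sub_cancel] at hdet0
      rw [det_iff] at hdet0
      obtain ⟨-, him⟩ := hdet0
      have hevn' : Even n' := by rcases hneven with ⟨m, hm⟩; exact ⟨m-1, by omega⟩
      obtain ⟨α, β, hαβ, heq2, heq0⟩ :=
        null2 (devC (P (n'+2)) Complex.I).im (devC (P n') Complex.I).im
          (∫ x, (P (n'+2)).eval x / (1+x^2)^2 ∂μ) (∫ x, (P n').eval x / (1+x^2)^2 ∂μ) him
      have base2 : α * (-Complex.I * devC (P (n'+2)) Complex.I).re
          + β * ∫ x, ((1:Polynomial ℝ) * P (n'+2)).eval x / (1+x^2)^2 ∂μ = 0 := by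
        rw [huz, one_mul_int]; exact heq2
      have base0 : α * (-Complex.I * devC (P n') Complex.I).re
          + β * ∫ x, ((1:Polynomial ℝ) * P n').eval x / (1+x^2)^2 ∂μ = 0 := by
        rw [huz, one_mul_int]; exact heq0
      have cond : ∀ m, 2 ≤ m →
          (α * (-Complex.I * devC (P (m+2)) Complex.I).re
            + β * ∫ x, ((1:Polynomial ℝ) * P (m+2)).eval x / (1+x^2)^2 ∂μ)
          = -(A m * (α * (-Complex.I * devC (P m) Complex.I).re
                + β * ∫ x, ((1:Polynomial ℝ) * P m).eval x / (1+x^2)^2 ∂μ))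
            - B m * (α * (-Complex.I * devC (P (m-2)) Complex.I).re
                + β * ∫ x, ((1:Polynomial ℝ) * P (m-2)).eval x / (1+x^2)^2 ∂μ) := by
        intro m hm
        have hRm : α * (-Complex.I * devC (R m) Complex.I).re
            + β * ∫ x, ((1:Polynomial ℝ) * R m).eval x / (1+x^2)^2 ∂μ = 0 := by
          rw [hi m (by omega), one_mul_int, hii m (by omega)]
          simp
        rw [hRn m hm] at hRm
        rw [devC_comb, int_comb μ hint] at hRm
        linear_combination hRm
      have ind : ∀ k, (α * (-Complex.I * devC (P (n' + 2*k)) Complex.I).re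
            + β * ∫ x, ((1:Polynomial ℝ) * P (n' + 2*k)).eval x / (1+x^2)^2 ∂μ = 0)
          ∧ (α * (-Complex.I * devC (P (n' + 2*k + 2)) Complex.I).re
            + β * ∫ x, ((1:Polynomial ℝ) * P (n' + 2*k + 2)).eval x / (1+x^2)^2 ∂μ = 0) := by
        intro k
        induction k with
        | zero =>
          constructor
          · simpa using base0
          · simpa using base2
        | succ k ih =>
          have hidx1 : n' + 2*(k+1) = n' + 2*k + 2 := by ring
          constructor
          · rw [hidx1]; exact ih.2
          · have hrel := cond (n' + 2*k + 2) (by omega)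
            have hsub : n' + 2*k + 2 - 2 = n' + 2*k := by omega
            rw [hsub] at hrel
            rw [show n' + 2*(k+1) + 2 = n' + 2*k + 2 + 2 from by ring]
            rw [hrel, ih.1, ih.2]
            ring
      refine core μ hsupp hint P hPmonic hPdeg hPorth n' 1 evC_one_ne (-Complex.I) α β hαβ
        (X^2) ?_ ?_
      · rw [devC_X_sq]
        norm_num [Complex.mul_re]
      · intro j hj
        rcases Nat.even_or_odd j with hje | hjo
        · obtain ⟨jj, hjj⟩ := hje
          obtain ⟨mm, hmm⟩ := hevn'
          obtain ⟨k, hk⟩ : ∃ k, j = n' + 2*k := ⟨jj - mm, by omega⟩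
          rw [hk]
          exact (ind k).1
        · rw [vanOdd j hjo, huz, devC_im_zero (P j) (oddPt j hjo)]
          ring
    · -- odd determinants
      intro n hn3 hnodd
      by_contra hdet0
      obtain ⟨n', rfl⟩ : ∃ m, n = m + 2 := ⟨n-2, by omega⟩
      rw [Nat.add_sub_cancel] at hdet0
      rw [det_iff] at hdet0
      obtain ⟨hre, -⟩ := hdet0
      have hodn' : Odd n' := by rcases hnodd with ⟨m, hm⟩; exact ⟨m-1, by omega⟩
      obtain ⟨α, β, hαβ, heq2, heq0⟩ :=
        null2 (devC (P (n'+2)) Complex.I).re (devC (P n') Complex.I).re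
          (∫ x, (x^3 + 3*x) * (P (n'+2)).eval x / (1+x^2)^2 ∂μ)
          (∫ x, (x^3 + 3*x) * (P n').eval x / (1+x^2)^2 ∂μ) hre
      have base2 : α * ((1:ℂ) * devC (P (n'+2)) Complex.I).re
          + β * ∫ x, ((X^3 + C (3:ℝ) * X) * P (n'+2)).eval x / (1+x^2)^2 ∂μ = 0 := by
        rw [hone, w1_int]; exact heq2
      have base0 : α * ((1:ℂ) * devC (P n') Complex.I).re
          + β * ∫ x, ((X^3 + C (3:ℝ) * X) * P n').eval x / (1+x^2)^2 ∂μ = 0 := by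
        rw [hone, w1_int]; exact heq0
      have cond : ∀ m, 2 ≤ m →
          (α * ((1:ℂ) * devC (P (m+2)) Complex.I).re
            + β * ∫ x, ((X^3 + C (3:ℝ) * X) * P (m+2)).eval x / (1+x^2)^2 ∂μ)
          = -(A m * (α * ((1:ℂ) * devC (P m) Complex.I).re
                + β * ∫ x, ((X^3 + C (3:ℝ) * X) * P m).eval x / (1+x^2)^2 ∂μ))
            - B m * (α * ((1:ℂ) * devC (P (m-2)) Complex.I).re
                + β * ∫ x, ((X^3 + C (3:ℝ) * X) * P (m-2)).eval x / (1+x^2)^2 ∂μ) := by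
        intro m hm
        have hRm : α * ((1:ℂ) * devC (R m) Complex.I).re
            + β * ∫ x, ((X^3 + C (3:ℝ) * X) * R m).eval x / (1+x^2)^2 ∂μ = 0 := by
          rw [hi m (by omega)]
          have h3 : ∫ x, ((X^3 + C (3:ℝ) * X) * R m).eval x / (1+x^2)^2 ∂μ
              = ∫ x, (R 1).eval x * (R m).eval x / (1+x^2)^2 ∂μ := by
            rw [hR1]; congr 1; funext x; rw [Polynomial.eval_mul]
          rw [h3, hiii m hm]
          simp
        rw [hRn m hm] at hRm
        rw [devC_comb, int_comb μ hint] at hRm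
        linear_combination hRm
      have ind : ∀ k, (α * ((1:ℂ) * devC (P (n' + 2*k)) Complex.I).re
            + β * ∫ x, ((X^3 + C (3:ℝ) * X) * P (n' + 2*k)).eval x / (1+x^2)^2 ∂μ = 0)
          ∧ (α * ((1:ℂ) * devC (P (n' + 2*k + 2)) Complex.I).re
            + β * ∫ x, ((X^3 + C (3:ℝ) * X) * P (n' + 2*k + 2)).eval x / (1+x^2)^2 ∂μ = 0) := by
        intro k
        induction k with
        | zero =>
          constructor
          · simpa using base0
          · simpa using base2
        | succ k ih =>
          have hidx1 : n' + 2*(k+1) = n' + 2*k + 2 := by ring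
          constructor
          · rw [hidx1]; exact ih.2
          · have hrel := cond (n' + 2*k + 2) (by omega)
            have hsub : n' + 2*k + 2 - 2 = n' + 2*k := by omega
            rw [hsub] at hrel
            rw [show n' + 2*(k+1) + 2 = n' + 2*k + 2 + 2 from by ring]
            rw [hrel, ih.1, ih.2]
            ring
      refine core μ hsupp hint P hPmonic hPdeg hPorth n' (X^3 + C (3:ℝ) * X) evC_cubic_ne
        1 α β hαβ X ?_ ?_
      · rw [devC_X]
        norm_num
      · intro j hj
        rcases Nat.even_or_odd j with hje | hjo
        · rw [vanEven j hje, hone, devC_re_zero (P j) (evenPt j hje)]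
          ring
        · obtain ⟨jj, hjj⟩ := hjo
          obtain ⟨mm, hmm⟩ := hodn'
          obtain ⟨k, hk⟩ : ∃ k, j = n' + 2*k := ⟨jj - mm, by omega⟩
          rw [hk]
          exact (ind k).1
  · rintro ⟨hE, hO⟩
    have hEx : ∀ n : ℕ, ∃ AB : ℝ × ℝ, 2 ≤ n →
        (devC (P (n+2) + C AB.1 * P n + C AB.2 * P (n-2)) Complex.I = 0
         ∧ (∫ x, (P (n+2) + C AB.1 * P n + C AB.2 * P (n-2)).eval x / (1+x^2)^2 ∂μ = 0)
         ∧ ∫ x, ((X^3 + C (3:ℝ) * X)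
              * (P (n+2) + C AB.1 * P n + C AB.2 * P (n-2))).eval x / (1+x^2)^2 ∂μ = 0) := by
      intro n
      by_cases hn : 2 ≤ n
      swap
      · exact ⟨(0,0), fun h => absurd h hn⟩
      obtain ⟨n', rfl⟩ : ∃ m, n = m + 2 := ⟨n-2, by omega⟩
      simp only [Nat.add_sub_cancel]
      rcases Nat.even_or_odd (n'+2) with hev | hod
      · -- even case
        have hdet := hE (n'+2) hn hev
        rw [Nat.add_sub_cancel] at hdet
        have hevn' : Even n' := by rcases hev with ⟨m, hm⟩; exact ⟨m-1, by omega⟩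
        have hev4 : Even (n'+2+2) := by rcases hevn' with ⟨m, hm⟩; exact ⟨m+2, by omega⟩
        have hre2 : (devC (P (n'+2)) Complex.I).re = 0 := devC_re_zero _ (evenPt _ hev)
        have hre0 : (devC (P n') Complex.I).re = 0 := devC_re_zero _ (evenPt _ hevn')
        have hre4 : (devC (P (n'+2+2)) Complex.I).re = 0 := devC_re_zero _ (evenPt _ hev4)
        have hΔ : (devC (P (n'+2)) Complex.I).im * (∫ x, (P n').eval x / (1+x^2)^2 ∂μ)
            - (devC (P n') Complex.I).im
              * (∫ x, (P (n'+2)).eval x / (1+x^2)^2 ∂μ) ≠ 0 := by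
          intro h
          exact hdet ((det_iff _ _ _ _).mpr ⟨by rw [hre2, hre0]; ring, h⟩)
        obtain ⟨Aa, Bb, hs1, hs2⟩ := solve2 _ _ _ _ ((devC (P (n'+2+2)) Complex.I).im)
          (∫ x, (P (n'+2+2)).eval x / (1+x^2)^2 ∂μ) hΔ
        refine ⟨(Aa, Bb), fun _ => ⟨?_, ?_, ?_⟩⟩
        · apply Complex.ext
          · rw [devC_add, devC_add, devC_C_mul, devC_C_mul]
            simp only [Complex.add_re, Complex.re_ofReal_mul, Complex.zero_re]
            rw [hre4, hre2, hre0]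
            ring
          · rw [devC_add, devC_add, devC_C_mul, devC_C_mul]
            simp only [Complex.add_im, Complex.im_ofReal_mul, Complex.zero_im]
            linarith [hs1]
        · have hcomb := int_comb μ hint 1 (P (n'+2+2)) (P (n'+2)) (P n') Aa Bb
          simp only [one_mul_int] at hcomb
          rw [hcomb]
          linarith [hs2]
        · apply int_odd μ hsymm _ (intg μ hint _)
          intro x
          simp only [Polynomial.eval_mul, Polynomial.eval_add, Polynomial.eval_pow,
            Polynomial.eval_X, Polynomial.eval_C, neg_sq]
          rw [evenPt _ hev4 x, evenPt _ hev x, evenPt _ hevn' x]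
          ring
      · -- odd case
        have hodn' : Odd n' := by rcases hod with ⟨m, hm⟩; exact ⟨m-1, by omega⟩
        have hdet := hO (n'+2) (by rcases hodn' with ⟨m, hm⟩; omega) hod
        rw [Nat.add_sub_cancel] at hdet
        have hod4 : Odd (n'+2+2) := by rcases hod with ⟨m, hm⟩; exact ⟨m+1, by omega⟩
        have him2 : (devC (P (n'+2)) Complex.I).im = 0 := devC_im_zero _ (oddPt _ hod)
        have him0 : (devC (P n') Complex.I).im = 0 := devC_im_zero _ (oddPt _ hodn')
        have him4 : (devC (P (n'+2+2)) Complex.I).im = 0 := devC_im_zero _ (oddPt _ hod4)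
        have hΔ : (devC (P (n'+2)) Complex.I).re
              * (∫ x, (x^3 + 3*x) * (P n').eval x / (1+x^2)^2 ∂μ)
            - (devC (P n') Complex.I).re
              * (∫ x, (x^3 + 3*x) * (P (n'+2)).eval x / (1+x^2)^2 ∂μ) ≠ 0 := by
          intro h
          exact hdet ((det_iff _ _ _ _).mpr ⟨h, by rw [him2, him0]; ring⟩)
        obtain ⟨Aa, Bb, hs1, hs2⟩ := solve2 _ _ _ _ ((devC (P (n'+2+2)) Complex.I).re)
          (∫ x, (x^3 + 3*x) * (P (n'+2+2)).eval x / (1+x^2)^2 ∂μ) hΔ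
        refine ⟨(Aa, Bb), fun _ => ⟨?_, ?_, ?_⟩⟩
        · apply Complex.ext
          · rw [devC_add, devC_add, devC_C_mul, devC_C_mul]
            simp only [Complex.add_re, Complex.re_ofReal_mul, Complex.zero_re]
            linarith [hs1]
          · rw [devC_add, devC_add, devC_C_mul, devC_C_mul]
            simp only [Complex.add_im, Complex.im_ofReal_mul, Complex.zero_im]
            rw [him4, him2, him0]
            ring
        · apply int_odd μ hsymm _ (intg μ hint _)
          intro x
          simp only [Polynomial.eval_add, Polynomial.eval_mul, Polynomial.eval_C, neg_sq]
          rw [oddPt _ hod4 x, oddPt _ hod x, oddPt _ hodn' x]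
          ring
        · have hcomb := int_comb μ hint (X^3 + C (3:ℝ) * X) (P (n'+2+2)) (P (n'+2)) (P n') Aa Bb
          simp only [w1_int] at hcomb
          rw [w1_int, hcomb]
          linarith [hs2]
    choose F hF using hEx
    set AA : ℕ → ℝ := fun n => if n = 1 then 3 - c3 else (F n).1 with hAA
    set RR : ℕ → Polynomial ℝ := fun n => if n = 0 then 1 else if n = 1 then X^3 + C (3:ℝ) * X
        else P (n+2) + C (AA n) * P n + C ((F n).2) * P (n-2) with hRR
    have hA1 : AA 1 = 3 - c3 := by rw [hAA]; norm_num
    have hAn : ∀ n, 2 ≤ n → AA n = (F n).1 := by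
      intro n hn
      rw [hAA]
      simp only [if_neg (by omega : ¬n = 1)]
    have hRR0 : RR 0 = 1 := by rw [hRR]; norm_num
    have hRR1 : RR 1 = X^3 + C (3:ℝ) * X := by rw [hRR]; norm_num
    have hRRn : ∀ n, 2 ≤ n →
        RR n = P (n+2) + C ((F n).1) * P n + C ((F n).2) * P (n-2) := by
      intro n hn
      rw [hRR]
      simp only [if_neg (by omega : ¬n = 0), if_neg (by omega : ¬n = 1), hAn n hn]
    refine ⟨AA, (fun n => (F n).2), RR, hRR0, ?_, ?_, ?_, ?_, ?_⟩
    · rw [hRR1, hA1, hP3, hP1]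
      rw [show (C (3:ℝ) : Polynomial ℝ) = C c3 + C (3 - c3) from by
        rw [← map_add]; norm_num]
      ring
    · intro n hn
      rw [hRRn n hn, hAn n hn]
    · intro n hn
      by_cases h1 : n = 1
      · subst h1
        rw [hRR1, devC_cubic]
        norm_num
      · have hn2 : 2 ≤ n := by omega
        rw [hRRn n hn2]
        exact (hF n hn2).1
    · intro n hn
      by_cases h1 : n = 1
      · subst h1
        rw [hRR1]
        apply int_odd μ hsymm _ (intg μ hint _)
        intro x
        simp only [Polynomial.eval_add, Polynomial.eval_mul, Polynomial.eval_pow,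
          Polynomial.eval_X, Polynomial.eval_C, neg_sq]
        ring
      · have hn2 : 2 ≤ n := by omega
        rw [hRRn n hn2]
        exact (hF n hn2).2.1
    · intro n hn
      rw [hRR1, hRRn n hn]
      refine Eq.trans ?_ (hF n hn).2.2
      congr 1; funext x; rw [Polynomial.eval_mul]
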